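/- Let q ∈ [0,1], β > 0, h > 0, p ≥ 2, and define F(β,h,q,p) = (β²/4)[1 − p·q^{p−1} + (p−1)·q^p] + log 2 + E[log cosh(β(p/2)^{1/2} q^{(p−1)/2} Y + h)], where Y is standard Gaussian. If q satisfies q = E[tanh²(β(p/2)^{1/2} q^{(p−1)/2} Y + h)], then ∂F/∂q(β,h,q,p) = 0. -/

import Mathlib

open MeasureTheory ProbabilityTheory Real Filter
open scoped NNReal ENNReal

section AuxStmt17

lemma aux_abs_tanh_le_one (t : ℝ) : |Real.tanh t| ≤ 1 := by
  rw [Real.tanh_eq_sinh_div_cosh, abs_div, abs_of_pos (Real.cosh_pos t),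
    div_le_one (Real.cosh_pos t)]
  nlinarith [Real.sinh_sq t, Real.cosh_pos t, abs_nonneg (Real.sinh t), sq_abs (Real.sinh t)]

lemma aux_continuous_tanh : Continuous Real.tanh := by
  have h : Real.tanh = fun x => Real.sinh x / Real.cosh x := funext Real.tanh_eq_sinh_div_cosh
  rw [h]
  exact Real.continuous_sinh.div Real.continuous_cosh fun x => (Real.cosh_pos x).ne'

lemma aux_hasDerivAt_tanh (t : ℝ) : HasDerivAt Real.tanh (1 - Real.tanh t ^ 2) t := by
  have h : HasDerivAt (fun t => Real.sinh t / Real.cosh t)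
      ((Real.cosh t * Real.cosh t - Real.sinh t * Real.sinh t) / Real.cosh t ^ 2) t :=
    (Real.hasDerivAt_sinh t).div (Real.hasDerivAt_cosh t) (Real.cosh_pos t).ne'
  have hfun : (fun t => Real.sinh t / Real.cosh t) = Real.tanh :=
    funext fun s => (Real.tanh_eq_sinh_div_cosh s).symm
  rw [hfun] at h
  convert h using 1
  have hc := (Real.cosh_pos t).ne'
  rw [Real.tanh_eq_sinh_div_cosh, div_pow]
  field_simp

lemma aux_hasDerivAt_log_cosh (t : ℝ) :
    HasDerivAt (fun t => Real.log (Real.cosh t)) (Real.tanh t) t := by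
  have h := (Real.hasDerivAt_log (Real.cosh_pos t).ne').comp t (Real.hasDerivAt_cosh t)
  simpa [Function.comp_def, Real.tanh_eq_sinh_div_cosh, div_eq_inv_mul] using h

lemma aux_log_cosh_le (t : ℝ) : Real.log (Real.cosh t) ≤ |t| := by
  have h1 : Real.cosh t ≤ Real.exp |t| := by
    rw [← Real.cosh_abs, ← Real.cosh_add_sinh]
    have h2 : 0 ≤ Real.sinh |t| := Real.sinh_nonneg_iff.mpr (abs_nonneg t)
    linarith
  rw [Real.log_le_iff_le_exp (Real.cosh_pos t)]
  exact h1

lemma aux_gauss_eq : gaussianReal 0 1 =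
    MeasureTheory.volume.withDensity fun y => ((gaussianPDFReal 0 1 y).toNNReal : ENNReal) := by
  rw [gaussianReal_of_var_ne_zero 0 one_ne_zero]
  rfl

lemma aux_pdf_eq (y : ℝ) :
    gaussianPDFReal 0 1 y = (Real.sqrt (2 * π))⁻¹ * Real.exp (-y ^ 2 / 2) := by
  unfold gaussianPDFReal
  norm_num

lemma aux_integral_gauss (g : ℝ → ℝ) :
    ∫ y, g y ∂(gaussianReal 0 1)
      = (Real.sqrt (2 * π))⁻¹ * ∫ y, Real.exp (-y ^ 2 / 2) * g y := by
  rw [aux_gauss_eq,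
    integral_withDensity_eq_integral_smul (measurable_gaussianPDFReal 0 1).real_toNNReal,
    ← integral_const_mul]
  congr 1
  funext y
  rw [NNReal.smul_def, Real.coe_toNNReal _ (gaussianPDFReal_nonneg 0 1 y), smul_eq_mul,
    aux_pdf_eq]
  ring

lemma aux_integrable_gauss_iff (g : ℝ → ℝ) :
    Integrable g (gaussianReal 0 1)
      ↔ Integrable (fun y => gaussianPDFReal 0 1 y * g y) MeasureTheory.volume := by
  have h : (fun y => ((gaussianPDFReal 0 1 y).toNNReal : ℝ≥0) • g y)
      = fun y => gaussianPDFReal 0 1 y * g y := by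
    funext y
    rw [NNReal.smul_def, Real.coe_toNNReal _ (gaussianPDFReal_nonneg 0 1 y), smul_eq_mul]
  rw [aux_gauss_eq,
    integrable_withDensity_iff_integrable_smul (measurable_gaussianPDFReal 0 1).real_toNNReal, h]

lemma aux_int_exp : Integrable (fun y : ℝ => Real.exp (-y ^ 2 / 2)) := by
  have h := integrable_exp_neg_mul_sq (b := (1 : ℝ) / 2) (by norm_num)
  refine h.congr (Eventually.of_forall fun y => ?_)
  show Real.exp (-(1 / 2) * y ^ 2) = Real.exp (-y ^ 2 / 2)
  have e1 : -(1 / 2 : ℝ) * y ^ 2 = -y ^ 2 / 2 := by ring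
  rw [e1]

lemma aux_int_abs_exp : Integrable (fun y : ℝ => |y| * Real.exp (-y ^ 2 / 2)) := by
  have h := (integrable_mul_exp_neg_mul_sq (b := (1 : ℝ) / 2) (by norm_num)).abs
  refine h.congr (Eventually.of_forall fun y => ?_)
  show |y * Real.exp (-(1 / 2) * y ^ 2)| = |y| * Real.exp (-y ^ 2 / 2)
  have e1 : -(1 / 2 : ℝ) * y ^ 2 = -y ^ 2 / 2 := by ring
  rw [abs_mul, abs_of_pos (Real.exp_pos _), e1]

lemma aux_continuous_pdf : Continuous (gaussianPDFReal 0 1) := by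
  have h : gaussianPDFReal 0 1 = fun y => (Real.sqrt (2 * π))⁻¹ * Real.exp (-y ^ 2 / 2) :=
    funext aux_pdf_eq
  rw [h]
  fun_prop

lemma aux_integrable_gauss_of_le (g : ℝ → ℝ) (hg : Continuous g) (C D : ℝ)
    (hC : 0 ≤ C) (hD : 0 ≤ D) (hb : ∀ y, |g y| ≤ C + D * |y|) :
    Integrable g (gaussianReal 0 1) := by
  rw [aux_integrable_gauss_iff]
  have hint : Integrable (fun y : ℝ =>
      (Real.sqrt (2 * π))⁻¹ * (C * Real.exp (-y ^ 2 / 2) + D * (|y| * Real.exp (-y ^ 2 / 2)))) :=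
    ((aux_int_exp.const_mul C).add (aux_int_abs_exp.const_mul D)).const_mul _
  refine hint.mono' (aux_continuous_pdf.mul hg).aestronglyMeasurable
    (Eventually.of_forall fun y => ?_)
  have h1 : (0 : ℝ) ≤ (Real.sqrt (2 * π))⁻¹ := by positivity
  have h2 := Real.exp_pos (-y ^ 2 / 2)
  have h3 := hb y
  rw [Real.norm_eq_abs, abs_mul, abs_of_nonneg (gaussianPDFReal_nonneg 0 1 y), aux_pdf_eq]
  have h5 : Real.exp (-y ^ 2 / 2) * |g y| ≤ Real.exp (-y ^ 2 / 2) * (C + D * |y|) :=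
    mul_le_mul_of_nonneg_left h3 h2.le
  have h6 := mul_le_mul_of_nonneg_left h5 h1
  calc (Real.sqrt (2 * π))⁻¹ * Real.exp (-y ^ 2 / 2) * |g y|
      = (Real.sqrt (2 * π))⁻¹ * (Real.exp (-y ^ 2 / 2) * |g y|) := by ring
    _ ≤ (Real.sqrt (2 * π))⁻¹ * (Real.exp (-y ^ 2 / 2) * (C + D * |y|)) := h6
    _ = (Real.sqrt (2 * π))⁻¹
        * (C * Real.exp (-y ^ 2 / 2) + D * (|y| * Real.exp (-y ^ 2 / 2))) := by ring

lemma aux_ibp_exp (a b : ℝ) :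
    ∫ y : ℝ, Real.exp (-y ^ 2 / 2) * (y * Real.tanh (a * y + b))
      = a * ∫ y : ℝ, Real.exp (-y ^ 2 / 2) * (1 - Real.tanh (a * y + b) ^ 2) := by
  have hψ : ∀ y : ℝ, HasDerivAt (fun y : ℝ => Real.exp (-y ^ 2 / 2))
      (-y * Real.exp (-y ^ 2 / 2)) y := by
    intro y
    have h1 : HasDerivAt (fun y : ℝ => -y ^ 2 / 2) (-y) y := by
      have h := (hasDerivAt_pow 2 y).neg.div_const 2
      refine h.congr_deriv ?_
      push_cast
      ring
    have h2 := (Real.hasDerivAt_exp (-y ^ 2 / 2)).comp y h1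
    simpa [Function.comp_def, mul_comm] using h2
  have htanh : ∀ y : ℝ, HasDerivAt (fun y => Real.tanh (a * y + b))
      ((1 - Real.tanh (a * y + b) ^ 2) * a) y := by
    intro y
    have h1 : HasDerivAt (fun y : ℝ => a * y + b) a y := by
      simpa using ((hasDerivAt_id y).const_mul a).add_const b
    exact (aux_hasDerivAt_tanh (a * y + b)).comp y h1
  have hder : ∀ y : ℝ, HasDerivAt (fun y : ℝ => -Real.tanh (a * y + b) * Real.exp (-y ^ 2 / 2))
      (Real.exp (-y ^ 2 / 2) * (y * Real.tanh (a * y + b))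
        - a * (Real.exp (-y ^ 2 / 2) * (1 - Real.tanh (a * y + b) ^ 2))) y := by
    intro y
    have h := (htanh y).neg.mul (hψ y)
    refine h.congr_deriv ?_
    simp only [Pi.neg_apply]
    ring
  have hcont1 : Continuous fun y : ℝ => Real.exp (-y ^ 2 / 2) * (y * Real.tanh (a * y + b)) := by
    have : Continuous fun y : ℝ => Real.tanh (a * y + b) :=
      aux_continuous_tanh.comp (by fun_prop)
    fun_prop
  have hcont2 : Continuous fun y : ℝ =>
      Real.exp (-y ^ 2 / 2) * (1 - Real.tanh (a * y + b) ^ 2) := by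
    have : Continuous fun y : ℝ => Real.tanh (a * y + b) :=
      aux_continuous_tanh.comp (by fun_prop)
    fun_prop
  have hint1 : Integrable (fun y : ℝ => Real.exp (-y ^ 2 / 2) * (y * Real.tanh (a * y + b))) := by
    refine aux_int_abs_exp.mono' hcont1.aestronglyMeasurable (Eventually.of_forall fun y => ?_)
    rw [Real.norm_eq_abs, abs_mul, abs_mul, abs_of_pos (Real.exp_pos _)]
    have hb1 := mul_le_mul_of_nonneg_left (aux_abs_tanh_le_one (a * y + b))
      (mul_nonneg (Real.exp_pos (-y ^ 2 / 2)).le (abs_nonneg y))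
    nlinarith [hb1]
  have hint2 : Integrable (fun y : ℝ =>
      Real.exp (-y ^ 2 / 2) * (1 - Real.tanh (a * y + b) ^ 2)) := by
    refine aux_int_exp.mono' hcont2.aestronglyMeasurable (Eventually.of_forall fun y => ?_)
    rw [Real.norm_eq_abs, abs_mul, abs_of_pos (Real.exp_pos _)]
    have h1 : |1 - Real.tanh (a * y + b) ^ 2| ≤ 1 := by
      rw [abs_le]
      constructor <;>
        nlinarith [sq_abs (Real.tanh (a * y + b)), abs_nonneg (Real.tanh (a * y + b)),
          aux_abs_tanh_le_one (a * y + b)]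
    nlinarith [Real.exp_pos (-y ^ 2 / 2)]
  have hGint : Integrable (fun y : ℝ => -Real.tanh (a * y + b) * Real.exp (-y ^ 2 / 2)) := by
    have hcont : Continuous fun y : ℝ => -Real.tanh (a * y + b) * Real.exp (-y ^ 2 / 2) := by
      have : Continuous fun y : ℝ => Real.tanh (a * y + b) :=
        aux_continuous_tanh.comp (by fun_prop)
      fun_prop
    refine aux_int_exp.mono' hcont.aestronglyMeasurable (Eventually.of_forall fun y => ?_)
    rw [Real.norm_eq_abs, abs_mul, abs_neg]
    nlinarith [aux_abs_tanh_le_one (a * y + b), Real.exp_pos (-y ^ 2 / 2),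
      abs_of_pos (Real.exp_pos (-y ^ 2 / 2)), abs_nonneg (Real.tanh (a * y + b))]
  have h0 := integral_eq_zero_of_hasDerivAt_of_integrable hder
    (hint1.sub (hint2.const_mul a)) hGint
  rw [integral_sub hint1 (hint2.const_mul a), integral_const_mul] at h0
  linarith

lemma aux_ibp_gauss (a b : ℝ) :
    ∫ y, y * Real.tanh (a * y + b) ∂(gaussianReal 0 1)
      = a * ∫ y, (1 - Real.tanh (a * y + b) ^ 2) ∂(gaussianReal 0 1) := by
  rw [aux_integral_gauss, aux_integral_gauss, aux_ibp_exp]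
  ring

end AuxStmt17

theorem stmt_17 (p : ℕ) (hp : 2 ≤ p) (β h : ℝ) (hβ : 0 < β) (hh : 0 < h)
    (q : ℝ) (hq : q ∈ Set.Icc (0 : ℝ) 1)
    (hfix : q = ∫ y, Real.tanh (β * Real.sqrt ((p : ℝ) / 2) * q ^ (((p : ℝ) - 1) / 2) * y + h) ^ 2
              ∂(gaussianReal 0 1)) :
    HasDerivAt (fun x : ℝ =>
      β ^ 2 / 4 * (1 - (p : ℝ) * x ^ (p - 1) + ((p : ℝ) - 1) * x ^ p) + Real.log 2
        + ∫ y, Real.log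
            (Real.cosh (β * Real.sqrt ((p : ℝ) / 2) * x ^ (((p : ℝ) - 1) / 2) * y + h))
            ∂(gaussianReal 0 1))
      0 q := by
  have hp2 : (2 : ℝ) ≤ (p : ℝ) := by exact_mod_cast hp
  set c := β * Real.sqrt ((p : ℝ) / 2) with hcdef
  set e := ((p : ℝ) - 1) / 2 with hedef
  have hc : 0 < c := mul_pos hβ (Real.sqrt_pos.mpr (by linarith))
  have he : 0 < e := by rw [hedef]; linarith
  -- positivity of q
  have hq0 : 0 < q := by
    rcases hq.1.lt_or_eq with h0 | h0
    · exact h0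
    · exfalso
      rw [← h0] at hfix
      rw [Real.zero_rpow he.ne'] at hfix
      simp only [mul_zero, zero_mul, zero_add] at hfix
      rw [integral_const] at hfix
      simp only [probReal_univ, ENNReal.toReal_one, one_smul] at hfix
      have ht : 0 < Real.tanh h := by
        rw [Real.tanh_eq_sinh_div_cosh]
        exact div_pos (Real.sinh_pos_iff.mpr hh) (Real.cosh_pos h)
      nlinarith
  -- polynomial part
  have P1 : HasDerivAt (fun x : ℝ =>
      β ^ 2 / 4 * (1 - (p : ℝ) * x ^ (p - 1) + ((p : ℝ) - 1) * x ^ p) + Real.log 2)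
      (β ^ 2 / 4 * (-((p : ℝ) * (((p - 1 : ℕ) : ℝ) * q ^ (p - 1 - 1)))
        + ((p : ℝ) - 1) * ((p : ℝ) * q ^ (p - 1)))) q := by
    exact (((((hasDerivAt_pow (p - 1) q).const_mul ((p : ℝ))).const_sub 1).add
      ((hasDerivAt_pow p q).const_mul ((p : ℝ) - 1))).const_mul (β ^ 2 / 4)).add_const _
  -- integrability of tanh squared
  have hconttanh : ∀ x : ℝ, Continuous fun y : ℝ => Real.tanh (c * x ^ e * y + h) := by
    intro x
    exact aux_continuous_tanh.comp (by fun_prop)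
  have Itanh2 : Integrable (fun y => Real.tanh (c * q ^ e * y + h) ^ 2) (gaussianReal 0 1) := by
    refine (integrable_const (1 : ℝ)).mono' ((hconttanh q).pow 2).aestronglyMeasurable
      (Eventually.of_forall fun y => ?_)
    rw [Real.norm_eq_abs, abs_pow]
    nlinarith [aux_abs_tanh_le_one (c * q ^ e * y + h), abs_nonneg (Real.tanh (c * q ^ e * y + h))]
  -- |y| integrable
  have Iabs : Integrable (fun y : ℝ => |y|) (gaussianReal 0 1) := by
    refine aux_integrable_gauss_of_le _ continuous_abs 0 1 le_rfl zero_le_one fun y => ?_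
    rw [abs_abs]
    linarith
  -- setup for dominated differentiation
  set M := (3 * q / 2) ^ e / (q / 2) with hM
  have hball : ∀ x ∈ Metric.ball q (q / 2), q / 2 < x ∧ x < 3 * q / 2 := by
    intro x hx
    rw [Metric.mem_ball, Real.dist_eq, abs_lt] at hx
    constructor <;> linarith [hx.1, hx.2]
  have key := hasDerivAt_integral_of_dominated_loc_of_deriv_le (μ := gaussianReal 0 1)
      (F := fun x y => Real.log (Real.cosh (c * x ^ e * y + h)))
      (F' := fun x y => c * e * x ^ (e - 1) * (y * Real.tanh (c * x ^ e * y + h)))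
      (x₀ := q) (s := Metric.ball q (q / 2)) (bound := fun y => c * e * M * |y|) (Metric.ball_mem_nhds q (half_pos hq0))
      ?_ ?_ ?_ ?_ ?_ ?_
  · obtain ⟨-, I⟩ := key
    have hIq : (∫ y, c * e * q ^ (e - 1) * (y * Real.tanh (c * q ^ e * y + h))
        ∂(gaussianReal 0 1)) = c * e * q ^ (e - 1) * (c * q ^ e * (1 - q)) := by
      rw [integral_const_mul, aux_ibp_gauss]
      have h1 : (∫ y, (1 - Real.tanh (c * q ^ e * y + h) ^ 2) ∂(gaussianReal 0 1)) = 1 - q := by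
        rw [integral_sub (integrable_const 1) Itanh2, integral_const]
        simp only [probReal_univ, ENNReal.toReal_one, one_smul]
        rw [← hfix]
      rw [h1]
    rw [hIq] at I
    have total := P1.add I
    refine total.congr_deriv ?_
    -- algebra
    have hnat1 : ((p - 1 : ℕ) : ℝ) = (p : ℝ) - 1 := by
      rw [Nat.cast_sub (by omega)]; norm_num
    have hsub2 : p - 1 - 1 = p - 2 := by omega
    have hsub1 : p - 1 = p - 2 + 1 := by omega
    have hcc : c * c = β ^ 2 * ((p : ℝ) / 2) := by
      rw [hcdef]
      have hs : Real.sqrt ((p : ℝ) / 2) * Real.sqrt ((p : ℝ) / 2) = (p : ℝ) / 2 :=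
        Real.mul_self_sqrt (by linarith)
      calc β * Real.sqrt ((p : ℝ) / 2) * (β * Real.sqrt ((p : ℝ) / 2))
          = β ^ 2 * (Real.sqrt ((p : ℝ) / 2) * Real.sqrt ((p : ℝ) / 2)) := by ring
        _ = β ^ 2 * ((p : ℝ) / 2) := by rw [hs]
    have hqq : q ^ (e - 1) * q ^ e = q ^ ((p - 2 : ℕ) : ℝ) := by
      rw [← Real.rpow_add hq0]
      congr 1
      rw [Nat.cast_sub (by omega : 2 ≤ p), hedef]
      push_cast
      ring
    have hqnat : q ^ ((p - 2 : ℕ) : ℝ) = q ^ (p - 2 : ℕ) := Real.rpow_natCast q (p - 2)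
    have expand : c * e * q ^ (e - 1) * (c * q ^ e * (1 - q))
        = β ^ 2 * ((p : ℝ) / 2) * e * q ^ (p - 2 : ℕ) * (1 - q) := by
      calc c * e * q ^ (e - 1) * (c * q ^ e * (1 - q))
          = c * c * e * (q ^ (e - 1) * q ^ e) * (1 - q) := by ring
        _ = β ^ 2 * ((p : ℝ) / 2) * e * q ^ (p - 2 : ℕ) * (1 - q) := by
            rw [hcc, hqq, hqnat]
    rw [expand, hnat1, hsub2, hsub1, pow_succ, hedef]
    ring
  · -- measurability of F x
    refine Eventually.of_forall fun x => ?_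
    exact ((Real.continuous_cosh.comp (by fun_prop)).log
      (fun y => (Real.cosh_pos _).ne')).aestronglyMeasurable
  · -- integrability of F q
    refine aux_integrable_gauss_of_le _
      ((Real.continuous_cosh.comp (by fun_prop)).log (fun y => (Real.cosh_pos _).ne'))
      |h| (c * q ^ e) (abs_nonneg h)
      (mul_nonneg hc.le (Real.rpow_nonneg hq0.le e)) fun y => ?_
    have h1 : 0 ≤ Real.log (Real.cosh (c * q ^ e * y + h)) :=
      Real.log_nonneg (Real.one_le_cosh _)
    rw [abs_of_nonneg h1]
    calc Real.log (Real.cosh (c * q ^ e * y + h)) ≤ |c * q ^ e * y + h| :=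
          aux_log_cosh_le _
      _ ≤ |c * q ^ e * y| + |h| := abs_add_le _ _
      _ = |c * q ^ e| * |y| + |h| := by rw [abs_mul]
      _ = c * q ^ e * |y| + |h| := by
          rw [abs_of_nonneg (mul_nonneg hc.le (Real.rpow_nonneg hq0.le e))]
      _ = |h| + c * q ^ e * |y| := by ring
  · -- measurability of F' q
    refine Continuous.aestronglyMeasurable ?_
    have := hconttanh q
    fun_prop
  · -- bound
    refine Eventually.of_forall fun y => fun x hx => ?_
    obtain ⟨hx1, hx2⟩ := hball x hx
    have hx0 : 0 < x := lt_trans (by linarith) hx1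
    have hxepos : 0 < x ^ (e - 1) := Real.rpow_pos_of_pos hx0 _
    have hxe : x ^ (e - 1) ≤ M := by
      rw [hM, Real.rpow_sub hx0, Real.rpow_one]
      exact div_le_div₀ (Real.rpow_nonneg (by linarith) e)
        (Real.rpow_le_rpow hx0.le hx2.le he.le) (by linarith) hx1.le
    have hMpos : 0 < M := lt_of_lt_of_le hxepos hxe
    have htb := aux_abs_tanh_le_one (c * x ^ e * y + h)
    have htn := abs_nonneg (Real.tanh (c * x ^ e * y + h))
    rw [Real.norm_eq_abs]
    calc |c * e * x ^ (e - 1) * (y * Real.tanh (c * x ^ e * y + h))|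
        = c * e * x ^ (e - 1) * (|y| * |Real.tanh (c * x ^ e * y + h)|) := by
          rw [abs_mul, abs_mul (c * e), abs_mul y, abs_of_pos (mul_pos hc he),
            abs_of_pos hxepos]
      _ ≤ c * e * M * (|y| * 1) := by
          apply mul_le_mul
          · exact mul_le_mul_of_nonneg_left hxe (by positivity)
          · exact mul_le_mul_of_nonneg_left htb (abs_nonneg y)
          · positivity
          · positivity
      _ = c * e * M * |y| := by ring
  · -- integrability of bound
    exact Iabs.const_mul _
  · -- differentiability
    refine Eventually.of_forall fun y => fun x hx => ?_
    obtain ⟨hx1, hx2⟩ := hball x hx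
    have hx0 : 0 < x := lt_trans (by linarith) hx1
    have hr : HasDerivAt (fun x : ℝ => x ^ e) (e * x ^ (e - 1)) x :=
      Real.hasDerivAt_rpow_const (Or.inl hx0.ne')
    have hin : HasDerivAt (fun x : ℝ => c * x ^ e * y + h) (c * (e * x ^ (e - 1)) * y) x :=
      ((hr.const_mul c).mul_const y).add_const h
    have hout := (aux_hasDerivAt_log_cosh (c * x ^ e * y + h)).comp x hin
    refine hout.congr_deriv ?_
    ring
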